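/- One has E_d E*_d E_0 E*_0 = (ϕ_1 ϕ_2 ⋯ ϕ_d / (η_d(θ_0) τ*_d(θ*_d))) · E_d E*_0, where η_d(θ_0) = (θ_0−θ_d)⋯(θ_0−θ_1) and τ*_d(θ*_d) = (θ*_d−θ*_0)⋯(θ*_d−θ*_{d−1}) are nonzero since θ_0,…,θ_d are mutually distinct and θ*_0,…,θ*_d are mutually distinct. -/

import Mathlib

open Polynomial Matrix Finset

noncomputable section

/-- The lower bidiagonal matrix with diagonal entries `θ 0, …, θ d` and
subdiagonal entries `1`. -/
def matA {K : Type*} [Field K] (d : ℕ) (θ : ℕ → K) :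
    Matrix (Fin (d + 1)) (Fin (d + 1)) K :=
  Matrix.of fun i j =>
    if (i : ℕ) = (j : ℕ) then θ (i : ℕ)
    else if (i : ℕ) = (j : ℕ) + 1 then 1 else 0

/-- The upper bidiagonal matrix with diagonal entries `θs 0, …, θs d` and
superdiagonal entries `φ 1, …, φ d` (the `(i-1,i)`-entry is `φ i`). -/
def matAs {K : Type*} [Field K] (d : ℕ) (θs φ : ℕ → K) :
    Matrix (Fin (d + 1)) (Fin (d + 1)) K :=
  Matrix.of fun i j =>
    if (i : ℕ) = (j : ℕ) then θs (i : ℕ)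
    else if (j : ℕ) = (i : ℕ) + 1 then φ (j : ℕ) else 0

/-- The primitive idempotent `E_i = ∏_{j ≠ i} (M - θ_j I)/(θ_i - θ_j)` of a matrix `M`
with eigenvalues `θ 0, …, θ d`. -/
def primIdem {K : Type*} [Field K] (d : ℕ) (θ : ℕ → K)
    (M : Matrix (Fin (d + 1)) (Fin (d + 1)) K) (i : ℕ) :
    Matrix (Fin (d + 1)) (Fin (d + 1)) K :=
  Polynomial.aeval M (∏ j ∈ (Finset.range (d + 1)).erase i,
    (Polynomial.C ((θ i - θ j)⁻¹) * (Polynomial.X - Polynomial.C (θ j))))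

/-- `τ_i(λ) = (λ - θ_0)(λ - θ_1)⋯(λ - θ_{i-1})`. -/
def tauPoly {K : Type*} [Field K] (θ : ℕ → K) (i : ℕ) : Polynomial K :=
  ∏ k ∈ Finset.range i, (Polynomial.X - Polynomial.C (θ k))

/-- `η_i(λ) = (λ - θ_d)(λ - θ_{d-1})⋯(λ - θ_{d-i+1})`. -/
def etaPoly {K : Type*} [Field K] (d : ℕ) (θ : ℕ → K) (i : ℕ) : Polynomial K :=
  ∏ k ∈ Finset.range i, (Polynomial.X - Polynomial.C (θ (d - k)))

section Aux

variable {K : Type*} [Field K] {d : ℕ}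

local notation "Mat" => Matrix (Fin (d+1)) (Fin (d+1)) K

lemma aeval_XsubC (M : Mat) (c : K) : Polynomial.aeval M (X - C c) = M - c • 1 := by
  rw [map_sub, Polynomial.aeval_X, Polynomial.aeval_C, Algebra.algebraMap_eq_smul_one]

lemma factor_mulVec (M : Mat) (c : K) (x : Fin (d+1) → K) :
    Polynomial.aeval M (X - C c) *ᵥ x = M *ᵥ x - c • x := by
  rw [aeval_XsubC, Matrix.sub_mulVec, Matrix.smul_mulVec, Matrix.one_mulVec]

lemma aeval_mul_mulVec (M : Mat) (p q : Polynomial K) (x : Fin (d+1) → K) :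
    Polynomial.aeval M (p * q) *ᵥ x = Polynomial.aeval M p *ᵥ (Polynomial.aeval M q *ᵥ x) := by
  rw [_root_.map_mul, Matrix.mulVec_mulVec]

lemma primIdem_eq (θ : ℕ → K) (M : Mat) (i : ℕ) :
    primIdem d θ M i = (∏ j ∈ (Finset.range (d + 1)).erase i, (θ i - θ j)⁻¹) •
      Polynomial.aeval M (∏ j ∈ (Finset.range (d + 1)).erase i, (X - C (θ j))) := by
  have hC : (∏ x ∈ (Finset.range (d + 1)).erase i, Polynomial.C ((θ i - θ x)⁻¹))
      = Polynomial.C (∏ x ∈ (Finset.range (d + 1)).erase i, ((θ i - θ x)⁻¹)) :=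
    (map_prod (Polynomial.C : K →+* Polynomial K) _ _).symm
  rw [primIdem, Finset.prod_mul_distrib, hC, _root_.map_mul,
    Polynomial.aeval_C, Algebra.algebraMap_eq_smul_one, smul_mul_assoc, one_mul]

lemma erase_zero_eq : (Finset.range (d + 1)).erase 0 = Finset.Icc 1 d := by
  ext x
  simp only [Finset.mem_erase, Finset.mem_range, Finset.mem_Icc, ne_eq]
  omega

lemma erase_d_eq : (Finset.range (d + 1)).erase d = Finset.range d := by
  ext x
  simp only [Finset.mem_erase, Finset.mem_range, ne_eq]
  omega

variable (θ θs φ ϕ : ℕ → K) (v : ℕ → Fin (d + 1) → K)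

lemma chainGen (hv1 : ∀ i < d, (matA d θ).mulVec (v i) - θ (d - i) • v i = v (i + 1)) :
    ∀ m i, i + m ≤ d →
      Polynomial.aeval (matA d θ) (∏ j ∈ Finset.Icc (d - i - m + 1) (d - i), (X - C (θ j)))
        *ᵥ v i = v (i + m) := by
  intro m
  induction m with
  | zero =>
    intro i hi
    have h : Finset.Icc (d - i - 0 + 1) (d - i) = (∅ : Finset ℕ) :=
      Finset.Icc_eq_empty (by omega)
    simp [h]
  | succ m ih =>
    intro i hi
    have h1 : d - i - (m + 1) + 1 = d - i - m := by omega
    have h2 : Finset.Icc (d - i - m) (d - i) =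
        insert (d - i - m) (Finset.Icc (d - i - m + 1) (d - i)) := by
      ext x
      simp only [Finset.mem_Icc, Finset.mem_insert]
      omega
    have hnm : d - i - m ∉ Finset.Icc (d - i - m + 1) (d - i) := by
      simp only [Finset.mem_Icc]
      omega
    rw [h1, h2, Finset.prod_insert hnm, aeval_mul_mulVec, ih i (by omega), factor_mulVec]
    have h3 : d - (i + m) = d - i - m := by omega
    have h4 := hv1 (i + m) (by omega)
    rw [h3] at h4
    rw [h4]
    try rfl
    try { congr 1; omega }

lemma E0v0core (hv1 : ∀ i < d, (matA d θ).mulVec (v i) - θ (d - i) • v i = v (i + 1)) :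
    Polynomial.aeval (matA d θ) (∏ j ∈ Finset.Icc 1 d, (X - C (θ j))) *ᵥ v 0 = v d := by
  have h := chainGen θ v hv1 d 0 (by omega)
  have h1 : d - 0 - d + 1 = 1 := by omega
  have h2 : d - 0 = d := by omega
  rw [h1, h2] at h
  simpa using h

lemma EdKill (hv1 : ∀ i < d, (matA d θ).mulVec (v i) - θ (d - i) • v i = v (i + 1))
    (hv2 : (matA d θ).mulVec (v d) - θ 0 • v d = 0) :
    ∀ i, 1 ≤ i → i ≤ d →
      Polynomial.aeval (matA d θ) (∏ j ∈ Finset.range d, (X - C (θ j))) *ᵥ v i = 0 := by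
  intro i h1 h2
  have hsub : Finset.Icc 0 (d - i) ⊆ Finset.range d := by
    intro x hx
    simp only [Finset.mem_Icc] at hx
    simp only [Finset.mem_range]
    omega
  rw [← Finset.prod_sdiff hsub, aeval_mul_mulVec]
  have hins : Finset.Icc 0 (d - i) = insert 0 (Finset.Icc 1 (d - i)) := by
    ext x
    simp only [Finset.mem_Icc, Finset.mem_insert]
    omega
  have hnm : (0 : ℕ) ∉ Finset.Icc 1 (d - i) := by simp
  rw [hins, Finset.prod_insert hnm, aeval_mul_mulVec]
  have hchain := chainGen θ v hv1 (d - i) i (by omega)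
  have e1 : d - i - (d - i) + 1 = 1 := by omega
  have e2 : i + (d - i) = d := by omega
  rw [e1, e2] at hchain
  rw [hchain, factor_mulVec, hv2, Matrix.mulVec_zero]
  try rw [Matrix.mulVec_zero]

lemma AsV0 (hv4 : (matAs d θs φ).mulVec (v 0) - θs 0 • v 0 = 0)
    (S : Finset ℕ) :
    Polynomial.aeval (matAs d θs φ) (∏ j ∈ S, (X - C (θs j))) *ᵥ v 0
      = (∏ j ∈ S, (θs 0 - θs j)) • v 0 := by
  classical
  induction S using Finset.induction with
  | empty => simp
  | insert _ _ hnm _ =>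
    rename_i a s ih
    rw [Finset.prod_insert hnm, Finset.prod_insert hnm, aeval_mul_mulVec, ih,
      Matrix.mulVec_smul, factor_mulVec]
    have h0 : (matAs d θs φ) *ᵥ v 0 = θs 0 • v 0 := sub_eq_zero.mp hv4
    rw [h0]
    module

lemma chainAsDown
    (hv3 : ∀ i, 1 ≤ i → i ≤ d →
      (matAs d θs φ).mulVec (v i) - θs i • v i = ϕ i • v (i - 1)) :
    ∀ i ≤ d, Polynomial.aeval (matAs d θs φ) (∏ j ∈ Finset.Icc 1 i, (X - C (θs j))) *ᵥ v i
      = (∏ k ∈ Finset.Icc 1 i, ϕ k) • v 0 := by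
  intro i
  induction i with
  | zero => simp
  | succ i ih =>
    intro hi
    have hins : Finset.Icc 1 (i + 1) = insert (i + 1) (Finset.Icc 1 i) := by
      ext x
      simp only [Finset.mem_Icc, Finset.mem_insert]
      omega
    have hnm : i + 1 ∉ Finset.Icc 1 i := by
      simp only [Finset.mem_Icc]
      omega
    rw [hins, Finset.prod_insert hnm, Finset.prod_insert hnm, mul_comm, aeval_mul_mulVec,
      factor_mulVec]
    have h3 := hv3 (i + 1) (by omega) hi
    rw [h3]
    simp only [Nat.add_sub_cancel, Matrix.mulVec_smul]
    rw [ih (by omega), smul_smul, mul_comm]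

lemma Es0core (hv3 : ∀ i, 1 ≤ i → i ≤ d →
      (matAs d θs φ).mulVec (v i) - θs i • v i = ϕ i • v (i - 1))
    (hv4 : (matAs d θs φ).mulVec (v 0) - θs 0 • v 0 = 0) :
    ∀ i ≤ d, ∃ α : K,
      Polynomial.aeval (matAs d θs φ) (∏ j ∈ Finset.Icc 1 d, (X - C (θs j))) *ᵥ v i
        = α • v 0 := by
  intro i hi
  have hsub : Finset.Icc 1 i ⊆ Finset.Icc 1 d := by
    intro x hx
    simp only [Finset.mem_Icc] at hx ⊢
    omega
  refine ⟨(∏ k ∈ Finset.Icc 1 i, ϕ k) * ∏ j ∈ Finset.Icc 1 d \ Finset.Icc 1 i, (θs 0 - θs j), ?_⟩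
  rw [← Finset.prod_sdiff hsub, aeval_mul_mulVec, chainAsDown θs φ ϕ v hv3 i hi,
    Matrix.mulVec_smul, AsV0 θs φ v hv4, smul_smul, mul_comm]

lemma mapSpanAs (hv3 : ∀ i, 1 ≤ i → i ≤ d →
      (matAs d θs φ).mulVec (v i) - θs i • v i = ϕ i • v (i - 1))
    (c : K) (t : ℕ) (ht : 1 ≤ t) (y : Fin (d+1) → K)
    (hy : y ∈ Submodule.span K (v '' Set.Icc t d)) :
    Polynomial.aeval (matAs d θs φ) (X - C c) *ᵥ y ∈
      Submodule.span K (v '' Set.Icc (t - 1) d) := by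
  induction hy using Submodule.span_induction with
  | mem x hx =>
    obtain ⟨j, hj, rfl⟩ := hx
    simp only [Set.mem_Icc] at hj
    rw [factor_mulVec]
    have h3 := hv3 j (by omega) hj.2
    have hAs : (matAs d θs φ) *ᵥ v j = θs j • v j + ϕ j • v (j - 1) :=
      sub_eq_iff_eq_add'.mp h3
    rw [hAs]
    have s1 := Submodule.subset_span (R := K)
      (show v j ∈ v '' Set.Icc (t - 1) d from ⟨j, Set.mem_Icc.mpr ⟨by omega, by omega⟩, rfl⟩)
    have s2 := Submodule.subset_span (R := K)
      (show v (j - 1) ∈ v '' Set.Icc (t - 1) d from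
        ⟨j - 1, Set.mem_Icc.mpr ⟨by omega, by omega⟩, rfl⟩)
    have hrw : θs j • v j + ϕ j • v (j - 1) - c • v j
        = (θs j - c) • v j + ϕ j • v (j - 1) := by
      rw [sub_smul]
      abel
    rw [hrw]
    exact Submodule.add_mem _ (Submodule.smul_mem _ _ s1) (Submodule.smul_mem _ _ s2)
  | zero =>
    rw [Matrix.mulVec_zero]
    exact Submodule.zero_mem _
  | add x y _ _ hx hy =>
    rw [Matrix.mulVec_add]
    exact Submodule.add_mem _ hx hy
  | smul a x _ hx =>
    rw [Matrix.mulVec_smul]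
    exact Submodule.smul_mem _ _ hx

lemma prodDown (hv3 : ∀ i, 1 ≤ i → i ≤ d →
      (matAs d θs φ).mulVec (v i) - θs i • v i = ϕ i • v (i - 1)) :
    ∀ m ≤ d, ∃ y ∈ Submodule.span K (v '' Set.Icc (d - m + 1) d),
      Polynomial.aeval (matAs d θs φ) (∏ j ∈ Finset.Ico (d - m) d, (X - C (θs j))) *ᵥ v d
        = (∏ k ∈ Finset.Icc (d - m + 1) d, ϕ k) • v (d - m) + y := by
  intro m
  induction m with
  | zero =>
    intro _
    refine ⟨0, Submodule.zero_mem _, ?_⟩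
    have h1 : Finset.Ico (d - 0) d = (∅ : Finset ℕ) := by simp
    have h2 : Finset.Icc (d - 0 + 1) d = (∅ : Finset ℕ) :=
      Finset.Icc_eq_empty (by omega)
    simp [h1, h2]
  | succ m ih =>
    intro hm
    obtain ⟨y, hy, hprev⟩ := ih (by omega)
    have hins : Finset.Ico (d - (m + 1)) d = insert (d - m - 1) (Finset.Ico (d - m) d) := by
      ext x
      simp only [Finset.mem_Ico, Finset.mem_insert]
      omega
    have hnm : d - m - 1 ∉ Finset.Ico (d - m) d := by
      simp only [Finset.mem_Ico]
      omega
    rw [hins, Finset.prod_insert hnm, aeval_mul_mulVec, hprev]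
    have hmain := hv3 (d - m) (by omega) (by omega)
    have hAsmain : (matAs d θs φ) *ᵥ v (d - m)
        = θs (d - m) • v (d - m) + ϕ (d - m) • v (d - m - 1) := by
      have := sub_eq_iff_eq_add'.mp hmain
      rw [this]
    rw [factor_mulVec, Matrix.mulVec_add, Matrix.mulVec_smul, hAsmain]
    refine ⟨(∏ k ∈ Finset.Icc (d - m + 1) d, ϕ k) •
        ((θs (d - m) - θs (d - m - 1)) • v (d - m)) +
        Polynomial.aeval (matAs d θs φ) (X - C (θs (d - m - 1))) *ᵥ y, ?_, ?_⟩
    · apply Submodule.add_mem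
      · apply Submodule.smul_mem
        apply Submodule.smul_mem
        exact Submodule.subset_span ⟨d - m, Set.mem_Icc.mpr ⟨by omega, by omega⟩, rfl⟩
      · have hmem := mapSpanAs θs φ ϕ v hv3 (θs (d - m - 1)) (d - m + 1) (by omega) y hy
        have he : d - m + 1 - 1 = d - m := by omega
        rw [he] at hmem
        have hsub : Submodule.span K (v '' Set.Icc (d - m) d) ≤
            Submodule.span K (v '' Set.Icc (d - (m + 1) + 1) d) := by
          apply Submodule.span_mono
          apply Set.image_mono
          intro x hx
          simp only [Set.mem_Icc] at hx ⊢
          omega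
        exact hsub hmem
    · have hprod : ∏ k ∈ Finset.Icc (d - (m + 1) + 1) d, ϕ k
          = ϕ (d - m) * ∏ k ∈ Finset.Icc (d - m + 1) d, ϕ k := by
        have hins2 : Finset.Icc (d - (m + 1) + 1) d =
            insert (d - m) (Finset.Icc (d - m + 1) d) := by
          ext x
          simp only [Finset.mem_Icc, Finset.mem_insert]
          omega
        have hnm2 : d - m ∉ Finset.Icc (d - m + 1) d := by
          simp only [Finset.mem_Icc]
          omega
        rw [hins2, Finset.prod_insert hnm2]
      rw [hprod]
      have he2 : d - (m + 1) = d - m - 1 := by omega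
      rw [he2, factor_mulVec]
      module

end Aux

section Main

variable {K : Type*} [Field K] {d : ℕ}

local notation "Mat" => Matrix (Fin (d+1)) (Fin (d+1)) K

lemma matrix_ext_mulVec {M N : Mat} (h : ∀ x, M *ᵥ x = N *ᵥ x) : M = N := by
  ext i j
  have h2 := congrFun (h (Pi.single j 1)) i
  simpa [Matrix.mulVec_single] using h2

variable (θ θs φ ϕ : ℕ → K) (v : ℕ → Fin (d + 1) → K)

lemma EdKillSpan (hv1 : ∀ i < d, (matA d θ).mulVec (v i) - θ (d - i) • v i = v (i + 1))
    (hv2 : (matA d θ).mulVec (v d) - θ 0 • v d = 0)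
    (y : Fin (d+1) → K) (hy : y ∈ Submodule.span K (v '' Set.Icc 1 d)) :
    Polynomial.aeval (matA d θ) (∏ j ∈ Finset.range d, (X - C (θ j))) *ᵥ y = 0 := by
  induction hy using Submodule.span_induction with
  | mem x hx =>
    obtain ⟨j, hj, rfl⟩ := hx
    simp only [Set.mem_Icc] at hj
    exact EdKill θ v hv1 hv2 j hj.1 hj.2
  | zero => rw [Matrix.mulVec_zero]
  | add x y _ _ hx hy => rw [Matrix.mulVec_add, hx, hy, add_zero]
  | smul a x _ hx => rw [Matrix.mulVec_smul, hx, smul_zero]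

lemma Es0span (hv3 : ∀ i, 1 ≤ i → i ≤ d →
      (matAs d θs φ).mulVec (v i) - θs i • v i = ϕ i • v (i - 1))
    (hv4 : (matAs d θs φ).mulVec (v 0) - θs 0 • v 0 = 0)
    (hvsp : Submodule.span K (Set.range fun i : Fin (d + 1) => v (i : ℕ)) = ⊤)
    (x : Fin (d+1) → K) :
    ∃ α : K, Polynomial.aeval (matAs d θs φ) (∏ j ∈ Finset.Icc 1 d, (X - C (θs j))) *ᵥ x
      = α • v 0 := by
  have hx : x ∈ Submodule.span K (Set.range fun i : Fin (d + 1) => v (i : ℕ)) := by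
    rw [hvsp]; exact Submodule.mem_top
  induction hx using Submodule.span_induction with
  | mem x hx =>
    obtain ⟨i, rfl⟩ := hx
    exact Es0core θs φ ϕ v hv3 hv4 (i : ℕ) (by omega)
  | zero => exact ⟨0, by simp⟩
  | add x y _ _ hx hy =>
    obtain ⟨α, hα⟩ := hx
    obtain ⟨β, hβ⟩ := hy
    exact ⟨α + β, by rw [Matrix.mulVec_add, hα, hβ, add_smul]⟩
  | smul a x _ hx =>
    obtain ⟨α, hα⟩ := hx
    exact ⟨a * α, by rw [Matrix.mulVec_smul, hα, smul_smul]⟩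

lemma coreProd (hv1 : ∀ i < d, (matA d θ).mulVec (v i) - θ (d - i) • v i = v (i + 1))
    (hv2 : (matA d θ).mulVec (v d) - θ 0 • v d = 0)
    (hv3 : ∀ i, 1 ≤ i → i ≤ d →
      (matAs d θs φ).mulVec (v i) - θs i • v i = ϕ i • v (i - 1))
    (hv4 : (matAs d θs φ).mulVec (v 0) - θs 0 • v 0 = 0)
    (hvsp : Submodule.span K (Set.range fun i : Fin (d + 1) => v (i : ℕ)) = ⊤) :
    Polynomial.aeval (matA d θ) (∏ j ∈ Finset.range d, (X - C (θ j))) *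
      Polynomial.aeval (matAs d θs φ) (∏ j ∈ Finset.range d, (X - C (θs j))) *
      Polynomial.aeval (matA d θ) (∏ j ∈ Finset.Icc 1 d, (X - C (θ j))) *
      Polynomial.aeval (matAs d θs φ) (∏ j ∈ Finset.Icc 1 d, (X - C (θs j)))
    = (∏ k ∈ Finset.Icc 1 d, ϕ k) •
      (Polynomial.aeval (matA d θ) (∏ j ∈ Finset.range d, (X - C (θ j))) *
       Polynomial.aeval (matAs d θs φ) (∏ j ∈ Finset.Icc 1 d, (X - C (θs j)))) := by
  -- Gd applied to v d
  obtain ⟨y, hy, hGd⟩ := prodDown θs φ ϕ v hv3 d le_rfl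
  have e1 : d - d = 0 := by omega
  have e2 : d - d + 1 = 1 := by omega
  have e3 : Finset.Ico (d - d) d = Finset.range d := by
    rw [e1, Finset.range_eq_Ico]
  rw [e3, e2, e1] at hGd
  rw [e2] at hy
  apply matrix_ext_mulVec
  intro x
  obtain ⟨α, hα⟩ := Es0span θs φ ϕ v hv3 hv4 hvsp x
  rw [Matrix.smul_mulVec, ← Matrix.mulVec_mulVec, ← Matrix.mulVec_mulVec,
    ← Matrix.mulVec_mulVec, ← Matrix.mulVec_mulVec, hα, Matrix.mulVec_smul,
    E0v0core θ v hv1, Matrix.mulVec_smul, hGd, Matrix.mulVec_smul, Matrix.mulVec_add,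
    Matrix.mulVec_smul, EdKillSpan θ v hv1 hv2 y hy, add_zero, Matrix.mulVec_smul]
  rw [smul_smul, smul_smul, mul_comm]

end Main

section Evals

variable {K : Type*} [Field K] {d : ℕ}

lemma etaEval (θ : ℕ → K) : (etaPoly d θ d).eval (θ 0) = ∏ j ∈ Finset.Icc 1 d, (θ 0 - θ j) := by
  rw [etaPoly, Polynomial.eval_prod]
  simp only [Polynomial.eval_sub, Polynomial.eval_X, Polynomial.eval_C]
  refine Finset.prod_bij' (fun k _ => d - k) (fun j _ => d - j) ?_ ?_ ?_ ?_ ?_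
  · intro a ha
    simp only [Finset.mem_range] at ha
    simp only [Finset.mem_Icc]
    omega
  · intro a ha
    simp only [Finset.mem_Icc] at ha
    simp only [Finset.mem_range]
    omega
  · intro a ha
    simp only [Finset.mem_range] at ha
    show d - (d - a) = a
    omega
  · intro a ha
    simp only [Finset.mem_Icc] at ha
    show d - (d - a) = a
    omega
  · intro a _
    rfl

lemma tauEval (θs : ℕ → K) :
    (tauPoly θs d).eval (θs d) = ∏ j ∈ Finset.range d, (θs d - θs j) := by
  rw [tauPoly, Polynomial.eval_prod]
  simp only [Polynomial.eval_sub, Polynomial.eval_X, Polynomial.eval_C]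

end Evals

theorem ED_EsD_EZero_EsZero {K : Type*} [Field K] (d : ℕ) (θ θs φ ϕ : ℕ → K)
    (hθ : ∀ i ≤ d, ∀ j ≤ d, θ i = θ j → i = j)
    (hθs : ∀ i ≤ d, ∀ j ≤ d, θs i = θs j → i = j)
    (hφ : ∀ i, 1 ≤ i → i ≤ d → φ i ≠ 0)
    (hE0 : ∀ i ≤ d, ∀ j ≤ d, 1 < |(i : ℤ) - (j : ℤ)| →
      primIdem d θ (matA d θ) i * matAs d θs φ * primIdem d θ (matA d θ) j = 0)
    (hE1 : ∀ i ≤ d, ∀ j ≤ d, |(i : ℤ) - (j : ℤ)| = 1 →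
      primIdem d θ (matA d θ) i * matAs d θs φ * primIdem d θ (matA d θ) j ≠ 0)
    (hEs0 : ∀ i ≤ d, ∀ j ≤ d, 1 < |(i : ℤ) - (j : ℤ)| →
      primIdem d θs (matAs d θs φ) i * matA d θ * primIdem d θs (matAs d θs φ) j = 0)
    (hEs1 : ∀ i ≤ d, ∀ j ≤ d, |(i : ℤ) - (j : ℤ)| = 1 →
      primIdem d θs (matAs d θs φ) i * matA d θ * primIdem d θs (matAs d θs φ) j ≠ 0)
    (hϕ : ∀ i, 1 ≤ i → i ≤ d → ϕ i ≠ 0)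
    (v : ℕ → Fin (d + 1) → K)
    (hvli : LinearIndependent K fun i : Fin (d + 1) => v (i : ℕ))
    (hvsp : Submodule.span K (Set.range fun i : Fin (d + 1) => v (i : ℕ)) = ⊤)
    (hv1 : ∀ i < d, (matA d θ).mulVec (v i) - θ (d - i) • v i = v (i + 1))
    (hv2 : (matA d θ).mulVec (v d) - θ 0 • v d = 0)
    (hv3 : ∀ i, 1 ≤ i → i ≤ d →
      (matAs d θs φ).mulVec (v i) - θs i • v i = ϕ i • v (i - 1))
    (hv4 : (matAs d θs φ).mulVec (v 0) - θs 0 • v 0 = 0) :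
    primIdem d θ (matA d θ) d * primIdem d θs (matAs d θs φ) d * primIdem d θ (matA d θ) 0 * primIdem d θs (matAs d θs φ) 0 = ((∏ k ∈ Finset.Icc (1) (d), ϕ k) / ((etaPoly d θ d).eval (θ 0) * (tauPoly θs d).eval (θs d))) • (primIdem d θ (matA d θ) d * primIdem d θs (matAs d θs φ) 0) := by
  have hcore := coreProd θ θs φ ϕ v hv1 hv2 hv3 hv4 hvsp
  rw [primIdem_eq θ (matA d θ) d, primIdem_eq θ (matA d θ) 0,
      primIdem_eq θs (matAs d θs φ) d, primIdem_eq θs (matAs d θs φ) 0,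
      erase_d_eq, erase_zero_eq]
  simp only [smul_mul_assoc, mul_smul_comm, smul_smul]
  rw [hcore, smul_smul]
  congr 1
  rw [etaEval θ, tauEval θs, div_eq_mul_inv, mul_inv,
    Finset.prod_inv_distrib, Finset.prod_inv_distrib, Finset.prod_inv_distrib,
    Finset.prod_inv_distrib]
  ring
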